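/- Let f be a Schur-concave function on probability distributions on k elements, let p be a probability distribution on k elements with non-increasingly ordered entries, and let δ ≥ 0. Then for every probability distribution q with ‖q − p‖ ≤ δ one has f(p̄^(δ)) ≤ f(q) ≤ f(p̲^(δ)), where p̄^(δ) and p̲^(δ) are the steepest and flattest δ-approximations of p; that is, the smoothed maximum f̄^(δ)(p) = max_{‖q−p‖≤δ} f(q) equals f(p̲^(δ)) and the smoothed minimum f̲^(δ)(p) = min_{‖q−p‖≤δ} f(q) equals f(p̄^(δ)). -/

import Mathlib

open Finset

noncomputable section

/-- The ℓ¹ distance `‖a − b‖ = Σᵢ |aᵢ − bᵢ|` between two vectors in `ℝ^k`. -/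
def l1dist {k : ℕ} (a b : Fin k → ℝ) : ℝ := ∑ i, |a i - b i|

/-- A probability distribution on `k` elements: nonnegative entries summing to 1. -/
def IsProbDist {k : ℕ} (p : Fin k → ℝ) : Prop := (∀ i, 0 ≤ p i) ∧ ∑ i, p i = 1

/-- The vector `a` rearranged in non-increasing order, `a↓`. -/
def descSort {k : ℕ} (a : Fin k → ℝ) : Fin k → ℝ := fun i => a (Tuple.sort a i.rev)

/-- The sum of the first `l` entries of `a` (1-based indexing: entries `1,…,l`). -/
def psum {k : ℕ} (a : Fin k → ℝ) (l : ℕ) : ℝ :=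
  ∑ i ∈ univ.filter (fun i : Fin k => (i : ℕ) < l), a i

/-- The sum of the entries of `a` from position `l` to `k` (1-based indexing). -/
def tailSum {k : ℕ} (a : Fin k → ℝ) (l : ℕ) : ℝ :=
  ∑ i ∈ univ.filter (fun i : Fin k => l ≤ (i : ℕ) + 1), a i

/-- `a` majorizes `b` (`a ≻ b`): the total sums agree and all partial sums of the
non-increasing rearrangements satisfy `Σ_{i=1}^l a↓ᵢ ≥ Σ_{i=1}^l b↓ᵢ` for `l = 1,…,k`. -/
def Majorizes {k : ℕ} (a b : Fin k → ℝ) : Prop :=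
  (∑ i, a i = ∑ i, b i) ∧
  ∀ l : ℕ, 1 ≤ l → l ≤ k → psum (descSort b) l ≤ psum (descSort a) l

/-- The distribution `e₁ = (1,0,…,0)`. -/
def e1 (k : ℕ) : Fin k → ℝ := fun i => if (i : ℕ) = 0 then 1 else 0

/-- The uniform distribution `η = (1/k,…,1/k)`. -/
def unif (k : ℕ) : Fin k → ℝ := fun _ => (k : ℝ)⁻¹

/-- The unnormalised vector `r` in the construction of the steepest approximation:
`r₁ = p₁ + δ/2`, `rᵢ = pᵢ` otherwise. -/
def steepR {k : ℕ} (δ : ℝ) (p : Fin k → ℝ) : Fin k → ℝ :=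
  fun i => if (i : ℕ) = 0 then p i + δ / 2 else p i

/-- `lstar ∈ {1,…,k}` is the truncation index of the steepest `δ`-approximation of `p`:
`Σ_{i=1}^{l*} rᵢ ≤ 1 < Σ_{i=1}^{l*+1} rᵢ` (the second sum being meaningful for `l* < k`). -/
def IsTruncIdx {k : ℕ} (δ : ℝ) (p : Fin k → ℝ) (lstar : ℕ) : Prop :=
  1 ≤ lstar ∧ lstar ≤ k ∧ psum (steepR δ p) lstar ≤ 1 ∧
    (lstar < k → 1 < psum (steepR δ p) (lstar + 1))

/-- `pbar` is the steepest `δ`-approximation `p̄^(δ)` of `p` (assumed non-increasingly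
ordered): if `‖p − e₁‖ ≤ δ` then `pbar = e₁`; otherwise `pbar` agrees with `r` on the
first `l*` entries, has `1 − Σ_{i=1}^{l*} rᵢ` at position `l*+1`, and `0` afterwards. -/
def IsSteepest {k : ℕ} (δ : ℝ) (p pbar : Fin k → ℝ) : Prop :=
  (l1dist p (e1 k) ≤ δ ∧ pbar = e1 k) ∨
  (δ < l1dist p (e1 k) ∧ ∃ lstar : ℕ, IsTruncIdx δ p lstar ∧
    ∀ i : Fin k, pbar i =
      if (i : ℕ) < lstar then steepR δ p i
      else if (i : ℕ) = lstar then 1 - psum (steepR δ p) lstar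
      else 0)

/-- `ε(x) = Σ_{i : pᵢ ≥ x} (pᵢ − x)`. -/
def epsFn {k : ℕ} (p : Fin k → ℝ) (x : ℝ) : ℝ :=
  ∑ i ∈ univ.filter (fun i : Fin k => x ≤ p i), (p i - x)

/-- `γ(y) = Σ_{i : pᵢ ≤ y} (y − pᵢ)`. -/
def gammaFn {k : ℕ} (p : Fin k → ℝ) (y : ℝ) : ℝ :=
  ∑ i ∈ univ.filter (fun i : Fin k => p i ≤ y), (y - p i)

/-- `pflat` is the flattest `δ`-approximation of `p` built from the cutting level `x*` and
the filling level `y*`: `x*, y* ∈ [0,1]`, `ε(x*) = γ(y*) = δ/2`, and `pflat` equals `x*`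
where `pᵢ ≥ x*`, equals `y*` where `pᵢ ≤ y*`, and equals `pᵢ` otherwise. -/
def IsFlattestWith {k : ℕ} (δ : ℝ) (p pflat : Fin k → ℝ) (x y : ℝ) : Prop :=
  x ∈ Set.Icc (0 : ℝ) 1 ∧ y ∈ Set.Icc (0 : ℝ) 1 ∧
  epsFn p x = δ / 2 ∧ gammaFn p y = δ / 2 ∧
  ∀ i : Fin k, pflat i = if x ≤ p i then x else if p i ≤ y then y else p i

/-- `pflat` is the flattest `δ`-approximation `p̲^(δ)` of `p` (assumed non-increasingly
ordered): if `‖p − η‖ ≤ δ` then `pflat = η`; otherwise it is obtained by cutting at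
level `x*` and filling at level `y*`. -/
def IsFlattest {k : ℕ} (δ : ℝ) (p pflat : Fin k → ℝ) : Prop :=
  (l1dist p (unif k) ≤ δ ∧ pflat = unif k) ∨
  (δ < l1dist p (unif k) ∧ ∃ x y : ℝ, IsFlattestWith δ p pflat x y)

end

noncomputable section
set_option linter.unusedSectionVars false
set_option linter.unusedVariables false
def tlsum {k : ℕ} (a : Fin k → ℝ) (l : ℕ) : ℝ :=
  ∑ i ∈ univ.filter (fun i : Fin k => l ≤ (i : ℕ)), a i

variable {k : ℕ}

lemma descSort_antitone (a : Fin k → ℝ) : Antitone (descSort a) := by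
  intro i j hij
  exact Tuple.monotone_sort a (by simpa [Fin.rev_le_rev] using hij)

lemma descSort_eq_self {a : Fin k → ℝ} (ha : Antitone a) : descSort a = a := by
  have h : a ∘ (Fin.revPerm : Equiv.Perm (Fin k)) = a ∘ Tuple.sort a := by
    rw [Tuple.comp_sort_eq_comp_iff_monotone]
    intro i j hij
    exact ha (by simpa [Fin.rev_le_rev] using hij)
  funext i
  have := congrFun h.symm i.rev
  simpa [descSort, Function.comp] using this

lemma sum_descSort (a : Fin k → ℝ) : ∑ i, descSort a i = ∑ i, a i := by
  have : ∑ i, descSort a i = ∑ i, a ((Fin.revPerm.trans (Tuple.sort a)) i) := rfl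
  rw [this, Equiv.sum_comp]


lemma card_filter_lt (l : ℕ) (h : l ≤ k) : (univ.filter (fun i : Fin k => (i : ℕ) < l)).card = l := by
  have : (univ.filter (fun i : Fin k => (i : ℕ) < l)) = Finset.map (Fin.castLEEmb h) univ := by
    ext i
    simp only [mem_filter, mem_univ, true_and, Finset.mem_map, Fin.castLEEmb, Function.Embedding.coeFn_mk]
    constructor
    · intro hi; exact ⟨⟨i, hi⟩, by simp [Fin.castLE, Fin.ext_iff]⟩
    · rintro ⟨j, rfl⟩; exact j.2
  rw [this]; simp

lemma psum_zero (a : Fin k → ℝ) : psum a 0 = 0 := by simp [psum]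

lemma psum_k (a : Fin k → ℝ) (l : ℕ) (h : k ≤ l) : psum a l = ∑ i, a i := by
  unfold psum
  rw [Finset.filter_true_of_mem]; intro i _; exact lt_of_lt_of_le i.2 h

-- split: psum a m = psum a l + mid, for l ≤ m
lemma psum_split (a : Fin k → ℝ) {l m : ℕ} (h : l ≤ m) :
    psum a m = psum a l + ∑ i ∈ univ.filter (fun i : Fin k => l ≤ (i:ℕ) ∧ (i:ℕ) < m), a i := by
  unfold psum
  rw [← Finset.sum_filter_add_sum_filter_not (univ.filter (fun i : Fin k => (i:ℕ) < m)) (fun i => (i:ℕ) < l)]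
  congr 1
  · congr 1; rw [Finset.filter_filter]; apply Finset.filter_congr; intro i _
    constructor
    · exact And.right
    · intro hi; exact ⟨lt_of_lt_of_le hi h, hi⟩
  · congr 1; rw [Finset.filter_filter]; apply Finset.filter_congr; intro i _
    simp only [not_lt, eq_iff_iff]; tauto

lemma filter_interval_card {l m : ℕ} (hlm : l ≤ m) (hm : m ≤ k) :
    (univ.filter (fun i : Fin k => l ≤ (i:ℕ) ∧ (i:ℕ) < m)).card = m - l := by
  have : (univ.filter (fun i : Fin k => l ≤ (i:ℕ) ∧ (i:ℕ) < m))
      = (univ.filter (fun i : Fin k => (i:ℕ) < m)) \ (univ.filter (fun i : Fin k => (i:ℕ) < l)) := by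
    ext i; simp [not_lt, and_comm]
  rw [this, Finset.card_sdiff_of_subset (by apply Finset.monotone_filter_right (s := univ); intro i _ hi; exact lt_of_lt_of_le hi hlm),
    card_filter_lt m hm, card_filter_lt l (le_trans hlm hm)]


lemma card_filter_ge (l : ℕ) (h : l ≤ k) : (univ.filter (fun i : Fin k => l ≤ (i : ℕ))).card = k - l := by
  have h2 : (univ.filter (fun i : Fin k => l ≤ (i : ℕ))) = (univ.filter (fun i : Fin k => (i : ℕ) < l))ᶜ := by
    ext i; simp [not_lt]
  rw [h2, Finset.card_compl, card_filter_lt l h, Fintype.card_fin]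


lemma psum_tlsum (a : Fin k → ℝ) (l : ℕ) : psum a l + tlsum a l = ∑ i, a i := by
  unfold psum tlsum
  rw [← Finset.sum_filter_add_sum_filter_not univ (fun i : Fin k => (i:ℕ) < l) a]
  congr 2
  ext i; simp [not_lt]

/-- L6: for antitone `a`, any subset sum is at most the top-`card` partial sum. -/
lemma sum_le_psum {a : Fin k → ℝ} (ha : Antitone a) (T : Finset (Fin k)) :
    ∑ i ∈ T, a i ≤ psum a T.card := by
  set l := T.card with hl
  have hlk : l ≤ k := by simpa using Finset.card_le_card (Finset.subset_univ T)
  set H := univ.filter (fun i : Fin k => (i : ℕ) < l) with hH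
  have hcard : H.card = l := card_filter_lt l hlk
  have hsplitT : ∑ i ∈ T, a i = ∑ i ∈ T ∩ H, a i + ∑ i ∈ T \ H, a i :=
    (Finset.sum_inter_add_sum_sdiff T H a).symm
  have hPH : psum a l = ∑ i ∈ H, a i := rfl
  have hsplitH : psum a l = ∑ i ∈ T ∩ H, a i + ∑ i ∈ H \ T, a i := by
    rw [hPH, ← Finset.sum_inter_add_sum_sdiff H T a, Finset.inter_comm]
  have hc : (T \ H).card = (H \ T).card := by
    have h1 := Finset.card_inter_add_card_sdiff T H
    have h2 := Finset.card_inter_add_card_sdiff H T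
    rw [Finset.inter_comm] at h2
    omega
  rw [hsplitT, hsplitH]
  apply add_le_add le_rfl
  rcases (T \ H).eq_empty_or_nonempty with he | hne
  · have : (H \ T) = ∅ := Finset.card_eq_zero.mp (by rw [← hc, he]; simp)
    rw [he, this]
  · obtain ⟨i0, hi0⟩ := hne
    have hi0H : ¬ ((i0:ℕ) < l) := by
      have := (Finset.mem_sdiff.mp hi0).2
      simpa [hH] using this
    have hl1 : 1 ≤ l := by
      by_contra h
      have h0 : T.card = 0 := by omega
      have : T = ∅ := Finset.card_eq_zero.mp h0
      rw [this] at hi0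
      simp at hi0
    have hlk' : l - 1 < k := by omega
    set c := a ⟨l - 1, hlk'⟩ with hcdef
    have h1 : ∑ i ∈ T \ H, a i ≤ (T \ H).card • c := by
      apply Finset.sum_le_card_nsmul
      intro i hi
      have : ¬ ((i:ℕ) < l) := by simpa [hH] using (Finset.mem_sdiff.mp hi).2
      exact ha (by simp [Fin.le_def]; omega)
    have h2 : (H \ T).card • c ≤ ∑ i ∈ H \ T, a i := by
      apply Finset.card_nsmul_le_sum
      intro i hi
      have : (i:ℕ) < l := by simpa [hH] using (Finset.mem_sdiff.mp hi).1
      exact ha (by simp [Fin.le_def]; omega)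
    calc ∑ i ∈ T \ H, a i ≤ (T \ H).card • c := h1
      _ = (H \ T).card • c := by rw [hc]
      _ ≤ ∑ i ∈ H \ T, a i := h2


/-- L7: head averaging: for antitone `a` and `l ≤ m ≤ k`, `l·psum(m) ≤ m·psum(l)`. -/
lemma psum_avg {a : Fin k → ℝ} (ha : Antitone a) {l m : ℕ} (hlm : l ≤ m) (hm : m ≤ k) :
    (l:ℝ) * psum a m ≤ (m:ℝ) * psum a l := by
  rcases Nat.eq_zero_or_pos l with rfl | hl
  · simp [psum]
  rcases eq_or_lt_of_le hlm with rfl | hlm'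
  · rfl
  have hlk : l - 1 < k := by omega
  set c := a ⟨l - 1, hlk⟩ with hc
  set mid := univ.filter (fun i : Fin k => l ≤ (i:ℕ) ∧ (i:ℕ) < m) with hmid
  have hsplit := psum_split a hlm
  have hmidcard : mid.card = m - l := filter_interval_card hlm hm
  have h1 : psum a l ≥ (l:ℝ) * c := by
    have := Finset.card_nsmul_le_sum (univ.filter (fun i : Fin k => (i:ℕ) < l)) a c
      (fun i hi => ha (by
        have : (i:ℕ) < l := by simpa using hi
        simp [Fin.le_def]; omega))
    rw [card_filter_lt l (by omega)] at this
    simpa [nsmul_eq_mul, psum] using this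
  have h2 : ∑ i ∈ mid, a i ≤ ((m:ℝ) - l) * c := by
    have := Finset.sum_le_card_nsmul mid a c
      (fun i hi => ha (by
        have : l ≤ (i:ℕ) ∧ (i:ℕ) < m := by simpa [hmid] using hi
        simp [Fin.le_def]; omega))
    rw [hmidcard] at this
    have hcast : ((m - l : ℕ) : ℝ) = (m:ℝ) - l := by push_cast [Nat.cast_sub hlm]; ring
    simpa [nsmul_eq_mul, hcast] using this
  rw [hsplit]
  have hl' : (1:ℝ) ≤ l := by exact_mod_cast hl
  have hml : (l:ℝ) ≤ m := by exact_mod_cast hlm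
  nlinarith [h1, h2, mul_le_mul_of_nonneg_left h2 (le_of_lt (by positivity : (0:ℝ) < l))]

/-- tail split -/
lemma tlsum_split (a : Fin k → ℝ) {l m : ℕ} (h : l ≤ m) :
    tlsum a l = (∑ i ∈ univ.filter (fun i : Fin k => l ≤ (i:ℕ) ∧ (i:ℕ) < m), a i) + tlsum a m := by
  unfold tlsum
  rw [← Finset.sum_filter_add_sum_filter_not (univ.filter (fun i : Fin k => l ≤ (i:ℕ))) (fun i => (i:ℕ) < m)]
  congr 2
  · ext i; simp only [mem_filter, mem_univ, true_and, Finset.filter_filter]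
  · ext i; simp only [mem_filter, mem_univ, true_and, Finset.filter_filter, not_lt]
    omega

/-- L8: tail averaging: for antitone `a` and `l2 ≤ l1 ≤ k`,
`(k−l2)·tlsum(l1) ≤ (k−l1)·tlsum(l2)`. -/
lemma tlsum_avg {a : Fin k → ℝ} (ha : Antitone a) {l1 l2 : ℕ} (h21 : l2 ≤ l1) (h1k : l1 ≤ k) :
    ((k:ℝ) - l2) * tlsum a l1 ≤ ((k:ℝ) - l1) * tlsum a l2 := by
  by_cases hk : l1 = k
  · subst hk
    have h0 : tlsum a l1 = 0 := by
      unfold tlsum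
      rw [Finset.filter_false_of_mem (fun i _ => by omega), Finset.sum_empty]
    rw [h0, mul_zero, sub_self, zero_mul]
  have hl1k : l1 < k := lt_of_le_of_ne h1k hk
  set c := a ⟨l1, hl1k⟩ with hc
  set mid := univ.filter (fun i : Fin k => l2 ≤ (i:ℕ) ∧ (i:ℕ) < l1) with hmid
  have hsplit := tlsum_split a h21 (m := l1)
  have hmidcard : mid.card = l1 - l2 := filter_interval_card h21 h1k
  have h1 : tlsum a l1 ≤ ((k:ℝ) - l1) * c := by
    have := Finset.sum_le_card_nsmul (univ.filter (fun i : Fin k => l1 ≤ (i:ℕ))) a c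
      (fun i hi => ha (by
        have : l1 ≤ (i:ℕ) := by simpa using hi
        simp [Fin.le_def]; omega))
    rw [card_filter_ge l1 h1k] at this
    have hcast : ((k - l1 : ℕ) : ℝ) = (k:ℝ) - l1 := by push_cast [Nat.cast_sub h1k]; ring
    simpa [tlsum, nsmul_eq_mul, hcast] using this
  have h2 : ∑ i ∈ mid, a i ≥ ((l1:ℝ) - l2) * c := by
    have := Finset.card_nsmul_le_sum mid a c
      (fun i hi => ha (by
        have : l2 ≤ (i:ℕ) ∧ (i:ℕ) < l1 := by simpa [hmid] using hi
        simp [Fin.le_def]; omega))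
    rw [hmidcard] at this
    have hcast : ((l1 - l2 : ℕ) : ℝ) = (l1:ℝ) - l2 := by push_cast [Nat.cast_sub h21]; ring
    simpa [nsmul_eq_mul, hcast] using this
  rw [hsplit]
  have c1 : (l2:ℝ) ≤ l1 := by exact_mod_cast h21
  have c2 : (l1:ℝ) < k := by exact_mod_cast hl1k
  nlinarith [h1, h2, mul_le_mul_of_nonneg_left h1 (by linarith : (0:ℝ) ≤ (l1:ℝ) - l2)]


/-- half-distance: if sums agree, any subset gap is at most half the l1 distance. -/
lemma sum_sub_le_half {q p : Fin k → ℝ} (hsum : ∑ i, q i = ∑ i, p i) (S : Finset (Fin k)) :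
    ∑ i ∈ S, (q i - p i) ≤ l1dist q p / 2 := by
  have h1 : ∑ i ∈ S, (q i - p i) ≤ ∑ i ∈ S, max (q i - p i) 0 :=
    Finset.sum_le_sum (fun i _ => le_max_left _ _)
  have h2 : ∑ i ∈ S, max (q i - p i) 0 ≤ ∑ i, max (q i - p i) 0 :=
    Finset.sum_le_sum_of_subset_of_nonneg (Finset.subset_univ S)
      (fun i _ _ => le_max_right _ _)
  have h3 : ∑ i, max (q i - p i) 0 = l1dist q p / 2 := by
    have : ∀ t : ℝ, max t 0 = (t + |t|) / 2 := fun t => by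
      rcases le_or_gt t 0 with h | h
      · rw [max_eq_right h, abs_of_nonpos h]; ring
      · rw [max_eq_left h.le, abs_of_pos h]; ring
    simp_rw [this]
    rw [← Finset.sum_div]
    unfold l1dist
    rw [Finset.sum_add_distrib]
    have : ∑ i, (q i - p i) = 0 := by rw [Finset.sum_sub_distrib, hsum, sub_self]
    rw [this, zero_add]
  linarith

/-- descSort q partial sums vs p partial sums, upper bound. -/
lemma psum_descSort_le {q p : Fin k → ℝ} (hp : Antitone p)
    (hsum : ∑ i, q i = ∑ i, p i) {l : ℕ} (hl : l ≤ k) (hd : l1dist q p ≤ (δ : ℝ)) :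
    psum (descSort q) l ≤ psum p l + δ / 2 := by
  set π : Equiv.Perm (Fin k) := Fin.revPerm.trans (Tuple.sort q) with hπ
  have hds : ∀ i, descSort q i = q (π i) := fun i => rfl
  set H := univ.filter (fun i : Fin k => (i : ℕ) < l) with hH
  set T := H.image π with hT
  have hcard : T.card = l := by
    rw [hT, Finset.card_image_of_injective _ π.injective, hH, card_filter_lt l hl]
  have h1 : psum (descSort q) l = ∑ i ∈ T, q i := by
    rw [hT, Finset.sum_image (fun a _ b _ h => π.injective h)]
    rfl
  have h2 : ∑ i ∈ T, q i = ∑ i ∈ T, p i + ∑ i ∈ T, (q i - p i) := by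
    rw [← Finset.sum_add_distrib]
    apply Finset.sum_congr rfl
    intro i _; ring
  have h3 : ∑ i ∈ T, p i ≤ psum p l := by
    have := sum_le_psum hp T
    rwa [hcard] at this
  have h4 := sum_sub_le_half hsum T
  have h5 : l1dist q p / 2 ≤ δ / 2 := by linarith
  rw [h1, h2]
  linarith

lemma l1dist_comm (a b : Fin k → ℝ) : l1dist a b = l1dist b a := by
  unfold l1dist; apply Finset.sum_congr rfl; intro i _; rw [abs_sub_comm]

/-- descSort q partial sums vs p partial sums, lower bound. -/
lemma le_psum_descSort {q p : Fin k → ℝ} (hq : Antitone (descSort q))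
    (hsum : ∑ i, q i = ∑ i, p i) {l : ℕ} (hl : l ≤ k) {δ : ℝ} (hd : l1dist q p ≤ δ) :
    psum p l - δ / 2 ≤ psum (descSort q) l := by
  set π : Equiv.Perm (Fin k) := Fin.revPerm.trans (Tuple.sort q) with hπ
  set H := univ.filter (fun i : Fin k => (i : ℕ) < l) with hH
  set U := H.image π.symm with hU
  have hcard : U.card = l := by
    rw [hU, Finset.card_image_of_injective _ π.symm.injective, hH, card_filter_lt l hl]
  have h1 : ∑ i ∈ U, descSort q i = ∑ i ∈ H, q i := by
    rw [hU, Finset.sum_image (fun a _ b _ h => π.symm.injective h)]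
    apply Finset.sum_congr rfl
    intro i _
    show q (π (π.symm i)) = q i
    rw [Equiv.apply_symm_apply]
  have h2 : ∑ i ∈ U, descSort q i ≤ psum (descSort q) l := by
    have := sum_le_psum hq U
    rwa [hcard] at this
  have h3 : ∑ i ∈ H, (p i - q i) ≤ δ / 2 := by
    have := sum_sub_le_half (p := q) (q := p) hsum.symm H
    rw [l1dist_comm] at this
    linarith
  have h4 : psum p l = ∑ i ∈ H, p i := rfl
  have h5 : ∑ i ∈ H, (p i - q i) = ∑ i ∈ H, p i - ∑ i ∈ H, q i := Finset.sum_sub_distrib _ _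
  linarith


lemma epsFn_eq (p : Fin k → ℝ) (x : ℝ) : epsFn p x = ∑ i, max (p i - x) 0 := by
  unfold epsFn
  rw [Finset.sum_filter]
  apply Finset.sum_congr rfl
  intro i _
  rcases le_or_gt x (p i) with h | h
  · rw [if_pos h, max_eq_left (by linarith)]
  · rw [if_neg (not_le.mpr h), max_eq_right (by linarith)]

lemma gammaFn_eq (p : Fin k → ℝ) (y : ℝ) : gammaFn p y = ∑ i, max (y - p i) 0 := by
  unfold gammaFn
  rw [Finset.sum_filter]
  apply Finset.sum_congr rfl
  intro i _
  rcases le_or_gt (p i) y with h | h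
  · rw [if_pos h, max_eq_left (by linarith)]
  · rw [if_neg (not_le.mpr h), max_eq_right (by linarith)]

lemma epsFn_anti (p : Fin k → ℝ) : Antitone (epsFn p) := by
  intro x y hxy
  rw [epsFn_eq, epsFn_eq]
  exact Finset.sum_le_sum (fun i _ => max_le_max (by linarith) le_rfl)

lemma gammaFn_mono (p : Fin k → ℝ) : Monotone (gammaFn p) := by
  intro x y hxy
  rw [gammaFn_eq, gammaFn_eq]
  exact Finset.sum_le_sum (fun i _ => max_le_max (by linarith) le_rfl)

lemma abs_eq_max_add_max (t : ℝ) : |t| = max t 0 + max (-t) 0 := by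
  rcases le_or_gt t 0 with h | h
  · rw [abs_of_nonpos h, max_eq_right h, max_eq_left (by linarith)]; ring
  · rw [abs_of_pos h, max_eq_left h.le, max_eq_right (by linarith)]; ring

lemma eps_gamma_unif (p : Fin k → ℝ) (hk : 0 < k) (hsum : ∑ i, p i = 1) :
    epsFn p (k:ℝ)⁻¹ = gammaFn p (k:ℝ)⁻¹ ∧
    l1dist p (unif k) = epsFn p (k:ℝ)⁻¹ + gammaFn p (k:ℝ)⁻¹ := by
  have h1 : l1dist p (unif k) = epsFn p (k:ℝ)⁻¹ + gammaFn p (k:ℝ)⁻¹ := by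
    rw [epsFn_eq, gammaFn_eq, ← Finset.sum_add_distrib]
    unfold l1dist unif
    apply Finset.sum_congr rfl
    intro i _
    rw [abs_eq_max_add_max]
    ring_nf
  have h2 : epsFn p (k:ℝ)⁻¹ - gammaFn p (k:ℝ)⁻¹ = 0 := by
    rw [epsFn_eq, gammaFn_eq, ← Finset.sum_sub_distrib]
    have : ∀ i : Fin k, max (p i - (k:ℝ)⁻¹) 0 - max ((k:ℝ)⁻¹ - p i) 0 = p i - (k:ℝ)⁻¹ := by
      intro i
      rcases le_or_gt (k:ℝ)⁻¹ (p i) with h | h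
      · rw [max_eq_left (by linarith), max_eq_right (by linarith)]; ring
      · rw [max_eq_right (by linarith), max_eq_left (by linarith)]; ring
    rw [Finset.sum_congr rfl (fun i _ => this i), Finset.sum_sub_distrib, hsum]
    simp
    rw [mul_inv_cancel₀ (by positivity : (k:ℝ) ≠ 0)]
    ring
  exact ⟨by linarith, h1⟩


section Flat
variable {p pflat : Fin k → ℝ} {x y δ : ℝ}
variable (hpa : Antitone p) (hp1 : ∑ i, p i = 1)
  (hyx : y < x) (heps : epsFn p x = δ / 2) (hgam : gammaFn p y = δ / 2)
  (hfl : ∀ i : Fin k, pflat i = if x ≤ p i then x else if p i ≤ y then y else p i)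

include hyx hfl in
lemma flat_decomp : ∀ i, pflat i = p i - max (p i - x) 0 + max (y - p i) 0 := by
  intro i
  rw [hfl i]
  rcases le_or_gt x (p i) with h | h
  · rw [if_pos h, max_eq_left (by linarith), max_eq_right (by linarith)]; ring
  · rw [if_neg (not_le.mpr h), max_eq_right (by linarith)]
    rcases le_or_gt (p i) y with h2 | h2
    · rw [if_pos h2, max_eq_left (by linarith)]; ring
    · rw [if_neg (not_le.mpr h2), max_eq_right (by linarith)]; ring

include hp1 hyx heps hgam hfl in
lemma flat_sum : ∑ i, pflat i = 1 := by
  rw [Finset.sum_congr rfl (fun i _ => flat_decomp hyx hfl i)]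
  rw [Finset.sum_add_distrib, Finset.sum_sub_distrib, hp1, ← epsFn_eq, ← gammaFn_eq, heps, hgam]
  ring

include hyx hfl in
lemma flat_l1 : l1dist p pflat = epsFn p x + gammaFn p y := by
  unfold l1dist
  rw [epsFn_eq, gammaFn_eq, ← Finset.sum_add_distrib]
  apply Finset.sum_congr rfl
  intro i _
  rw [flat_decomp hyx hfl i]
  rcases le_or_gt x (p i) with h | h
  · rw [max_eq_left (by linarith), max_eq_right (by linarith)]
    rw [abs_of_nonneg (by linarith)]; ring
  · rw [max_eq_right (by linarith)]
    rcases le_or_gt (p i) y with h2 | h2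
    · rw [max_eq_left (by linarith), abs_of_nonpos (by linarith)]; ring
    · rw [max_eq_right (by linarith), abs_of_nonpos (by linarith)]; ring

include hyx hfl in
lemma flat_clamp : ∀ i, pflat i = max y (min x (p i)) := by
  intro i
  rw [hfl i]
  rcases le_or_gt x (p i) with h | h
  · rw [if_pos h, min_eq_left h, max_eq_right (by linarith)]
  · rw [if_neg (not_le.mpr h), min_eq_right h.le]
    rcases le_or_gt (p i) y with h2 | h2
    · rw [if_pos h2, max_eq_left h2]
    · rw [if_neg (not_le.mpr h2), max_eq_right h2.le]

include hpa hyx hfl in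
lemma flat_antitone : Antitone pflat := by
  intro i j hij
  rw [flat_clamp hyx hfl, flat_clamp hyx hfl]
  exact max_le_max le_rfl (min_le_min le_rfl (hpa hij))

include hpa hp1 hyx heps hgam hfl in
lemma flat_key {q' : Fin k → ℝ} (hqa : Antitone q') (hq1 : ∑ i, q' i = 1)
    (hql : ∀ l : ℕ, l ≤ k → psum p l - δ / 2 ≤ psum q' l) :
    ∀ l : ℕ, 1 ≤ l → l ≤ k → psum pflat l ≤ psum q' l := by
  intro l hl1 hlk
  rcases eq_or_lt_of_le hlk with rfl | hllt
  · rw [psum_k pflat l le_rfl, psum_k q' l le_rfl, flat_sum hp1 hyx heps hgam hfl, hq1]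
  -- now l < k
  have hlm1 : l - 1 < k := by omega
  by_cases hxc : x ≤ p ⟨l - 1, hlm1⟩
  · -- case (a): all of the first l entries are cut to x
    set A := univ.filter (fun i : Fin k => x ≤ p i) with hA
    set a := A.card with ha
    have hak : a ≤ k := by simpa using Finset.card_le_card (Finset.subset_univ A)
    have hHsubA : univ.filter (fun i : Fin k => (i:ℕ) < l) ⊆ A := by
      intro i hi
      have hi' : (i:ℕ) < l := by simpa using hi
      simp only [hA, mem_filter, mem_univ, true_and]
      exact le_trans hxc (hpa (by simp [Fin.le_def]; omega))
    have hla : l ≤ a := by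
      have := Finset.card_le_card hHsubA
      rwa [card_filter_lt l hlk] at this
    have hAsum : ∑ i ∈ A, p i = δ / 2 + a * x := by
      have h1 : ∑ i ∈ A, (p i - x) = epsFn p x := rfl
      have h2 : ∑ i ∈ A, (p i - x) = ∑ i ∈ A, p i - a * x := by
        rw [Finset.sum_sub_distrib, Finset.sum_const, nsmul_eq_mul]
      rw [heps] at h1
      linarith [h1, h2.symm.trans h1]
    have h2 : ∑ i ∈ A, p i ≤ psum p a := sum_le_psum hpa A
    have h3 : psum p a - δ / 2 ≤ psum q' a := hql a hak
    have h4 : (a:ℝ) * x ≤ psum q' a := by linarith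
    have h5 : (l:ℝ) * psum q' a ≤ (a:ℝ) * psum q' l := psum_avg hqa hla hak
    have hpfl : psum pflat l = l * x := by
      unfold psum
      rw [Finset.sum_congr rfl (fun i hi => by
        rw [hfl i, if_pos (by
          have := hHsubA hi
          simpa [hA] using this)])]
      rw [Finset.sum_const, card_filter_lt l hlk, nsmul_eq_mul]
    rw [hpfl]
    have hl0 : (0:ℝ) < l := by exact_mod_cast hl1
    have ha0 : (0:ℝ) < a := by have : 1 ≤ a := le_trans hl1 hla; exact_mod_cast this
    have hll : (l:ℝ) ≤ a := by exact_mod_cast hla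
    nlinarith [mul_le_mul_of_nonneg_left h4 hl0.le]
  · by_cases hyc : p ⟨l, hllt⟩ ≤ y
    · -- case (c): tail entries are filled to y
      set B := univ.filter (fun i : Fin k => p i ≤ y) with hB
      set b := B.card with hb
      have hbk : b ≤ k := by simpa using Finset.card_le_card (Finset.subset_univ B)
      have hTsubB : univ.filter (fun i : Fin k => l ≤ (i:ℕ)) ⊆ B := by
        intro i hi
        have hi' : l ≤ (i:ℕ) := by simpa using hi
        simp only [hB, mem_filter, mem_univ, true_and]
        exact le_trans (hpa (by simp [Fin.le_def]; omega)) hyc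
      have hklb : k - l ≤ b := by
        have := Finset.card_le_card hTsubB
        rwa [card_filter_ge l hlk] at this
      have hb1 : 1 ≤ b := by omega
      -- tail of pflat equals (k - l) * y
      have htail : tlsum pflat l = ((k:ℝ) - l) * y := by
        unfold tlsum
        rw [Finset.sum_congr rfl (fun i hi => by
          have hiB := hTsubB hi
          have hpy : p i ≤ y := by simpa [hB] using hiB
          rw [hfl i, if_neg (by push_neg; linarith), if_pos hpy])]
        rw [Finset.sum_const, card_filter_ge l hlk, nsmul_eq_mul]
        congr 1
        push_cast [Nat.cast_sub hlk]
        ring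
      -- bound tail of q'
      have hBsum : ∑ i ∈ B, p i = b * y - δ / 2 := by
        have h1 : ∑ i ∈ B, (y - p i) = gammaFn p y := rfl
        have h2 : ∑ i ∈ B, (y - p i) = b * y - ∑ i ∈ B, p i := by
          rw [Finset.sum_sub_distrib, Finset.sum_const, nsmul_eq_mul]
        rw [hgam] at h1
        linarith [h2.symm.trans h1]
      have hcompl : psum p (k - b) ≥ 1 - ∑ i ∈ B, p i := by
        have h1 : ∑ i ∈ Bᶜ, p i ≤ psum p Bᶜ.card := sum_le_psum hpa Bᶜ
        have h2 : Bᶜ.card = k - b := by rw [Finset.card_compl, Fintype.card_fin]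
        have h3 : ∑ i ∈ Bᶜ, p i = 1 - ∑ i ∈ B, p i := by
          rw [← hp1, ← Finset.sum_compl_add_sum B p]; ring
        rw [h2] at h1
        linarith
      have htq : tlsum q' (k - b) ≤ b * y := by
        have h1 := psum_tlsum q' (k - b)
        rw [hq1] at h1
        have h2 := hql (k - b) (by omega)
        linarith [hcompl, hBsum]
      have havg : ((k:ℝ) - (k - b : ℕ)) * tlsum q' l ≤ ((k:ℝ) - l) * tlsum q' (k - b) :=
        tlsum_avg hqa (by omega) hlk
      have hcast : ((k:ℝ) - ((k - b : ℕ) : ℝ)) = (b:ℝ) := by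
        push_cast [Nat.cast_sub hbk]; ring
      rw [hcast] at havg
      have hkl0 : (0:ℝ) ≤ (k:ℝ) - l := by
        have : (l:ℝ) ≤ k := by exact_mod_cast hlk
        linarith
      have hb0 : (0:ℝ) < b := by exact_mod_cast hb1
      have htqf : tlsum q' l ≤ ((k:ℝ) - l) * y := by
        have hklb' : (k:ℝ) - l ≤ b := by
          have : ((k - l : ℕ) : ℝ) ≤ b := by exact_mod_cast hklb
          have : ((k:ℝ) - l) = ((k - l : ℕ) : ℝ) := by push_cast [Nat.cast_sub hlk]; ring
          linarith [this ▸ (by exact_mod_cast hklb : ((k - l : ℕ) : ℝ) ≤ (b:ℝ))]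
        nlinarith [havg, mul_le_mul_of_nonneg_left htq hkl0]
      have hpq := psum_tlsum q' l
      have hpf := psum_tlsum pflat l
      rw [hq1] at hpq
      rw [flat_sum hp1 hyx heps hgam hfl] at hpf
      linarith [htail, htqf]
    · -- case (b): psum pflat l = psum p l - δ/2
      push_neg at hxc hyc
      have hkey : psum p l - psum pflat l = δ / 2 := by
        have hHmax : ∀ i : Fin k, (i:ℕ) < l → pflat i = p i - max (p i - x) 0 := by
          intro i hi
          have hyi : y < p i := lt_of_lt_of_le hyc (hpa (by simp [Fin.le_def]; omega))
          rw [hfl i]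
          rcases le_or_gt x (p i) with h | h
          · rw [if_pos h, max_eq_left (by linarith)]; ring
          · rw [if_neg (not_le.mpr h), if_neg (not_le.mpr hyi), max_eq_right (by linarith)]
            ring
        have hTzero : ∀ i : Fin k, l ≤ (i:ℕ) → max (p i - x) 0 = 0 := by
          intro i hi
          have : p i < x := lt_of_le_of_lt (hpa (by simp [Fin.le_def]; omega)) hxc
          rw [max_eq_right (by linarith)]
        have h1 : psum pflat l = psum p l - ∑ i ∈ univ.filter (fun i : Fin k => (i:ℕ) < l), max (p i - x) 0 := by
          unfold psum
          rw [Finset.sum_congr rfl (fun i hi => hHmax i (by simpa using hi))]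
          rw [Finset.sum_sub_distrib]
        have h2 : ∑ i ∈ univ.filter (fun i : Fin k => (i:ℕ) < l), max (p i - x) 0
            = ∑ i, max (p i - x) 0 := by
          apply Finset.sum_subset (Finset.filter_subset _ _)
          intro i _ hi
          exact hTzero i (by simpa [not_lt] using hi)
        rw [h1, h2, ← epsFn_eq, heps]
        ring
      linarith [hql l hlk]
end Flat


lemma filter_eq_singleton (m : ℕ) (hm : m < k) :
    univ.filter (fun i : Fin k => m ≤ (i:ℕ) ∧ (i:ℕ) < m + 1) = {⟨m, hm⟩} := by
  ext i
  simp only [mem_filter, mem_univ, true_and, Finset.mem_singleton, Fin.ext_iff]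
  omega

lemma psum_succ (a : Fin k → ℝ) {m : ℕ} (hm : m < k) :
    psum a (m + 1) = psum a m + a ⟨m, hm⟩ := by
  rw [psum_split a (Nat.le_succ m), filter_eq_singleton m hm, Finset.sum_singleton]

lemma tlsum_succ (a : Fin k → ℝ) {m : ℕ} (hm : m < k) :
    tlsum a m = a ⟨m, hm⟩ + tlsum a (m + 1) := by
  rw [tlsum_split a (Nat.le_succ m), filter_eq_singleton m hm, Finset.sum_singleton]

lemma mem_filter_lt_zero {l : ℕ} (hk : 0 < k) (hl : 1 ≤ l) :
    (⟨0, hk⟩ : Fin k) ∈ univ.filter (fun i : Fin k => (i:ℕ) < l) := by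
  simp; omega

lemma psum_ite_zero (hk : 0 < k) {l : ℕ} (hl : 1 ≤ l) (c : ℝ) :
    ∑ i ∈ univ.filter (fun i : Fin k => (i:ℕ) < l), (if (i:ℕ) = 0 then c else 0) = c := by
  have h : ∀ i : Fin k, ((i:ℕ) = 0) = (i = ⟨0, hk⟩) := fun i => by
    simp [Fin.ext_iff]
  simp_rw [h]
  rw [Finset.sum_ite_eq' _ (⟨0, hk⟩ : Fin k) (fun _ => c), if_pos (mem_filter_lt_zero hk hl)]

lemma steepR_psum (hk : 0 < k) (δ : ℝ) (p : Fin k → ℝ) {l : ℕ} (hl : 1 ≤ l) :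
    psum (steepR δ p) l = psum p l + δ / 2 := by
  unfold psum steepR
  have : ∀ i : Fin k, (if (i:ℕ) = 0 then p i + δ / 2 else p i)
      = p i + (if (i:ℕ) = 0 then δ / 2 else 0) := fun i => by
    rcases eq_or_ne (i:ℕ) 0 with h | h
    · rw [if_pos h, if_pos h]
    · rw [if_neg h, if_neg h]; ring
  rw [Finset.sum_congr rfl (fun i _ => this i), Finset.sum_add_distrib, psum_ite_zero hk hl]

section Steep
variable {p pbar : Fin k → ℝ} {δ : ℝ} {lstar : ℕ}
variable (hpa : Antitone p) (hp0 : ∀ i, 0 ≤ p i) (hp1 : ∑ i, p i = 1) (hδ : 0 ≤ δ)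
  (h1l : 1 ≤ lstar) (hlk : lstar ≤ k) (hS1 : psum (steepR δ p) lstar ≤ 1)
  (hS2 : lstar < k → 1 < psum (steepR δ p) (lstar + 1))
  (hbar : ∀ i : Fin k, pbar i =
      if (i : ℕ) < lstar then steepR δ p i
      else if (i : ℕ) = lstar then 1 - psum (steepR δ p) lstar
      else 0)

include h1l hlk in
lemma hk_pos : 0 < k := by omega

include hp1 h1l hlk in
lemma sum_steepR : ∑ i, steepR δ p i = 1 + δ / 2 := by
  rw [← psum_k (steepR δ p) k le_rfl, steepR_psum (by omega) δ p (by omega : 1 ≤ k),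
    psum_k p k le_rfl, hp1]

include hp0 hδ h1l hS1 hbar in
lemma pbar_nonneg : ∀ i, 0 ≤ pbar i := by
  intro i
  rw [hbar i]
  split_ifs with h1 h2
  · unfold steepR; split_ifs <;> [linarith [hp0 i]; exact hp0 i]
  · linarith
  · exact le_rfl

include hp1 hδ h1l hlk hS1 hbar in
lemma pbar_sum : ∑ i, pbar i = 1 := by
  have hpoint : ∀ i : Fin k, pbar i =
      (if (i:ℕ) < lstar then steepR δ p i else 0)
      + (if (i:ℕ) = lstar then 1 - psum (steepR δ p) lstar else 0) := by
    intro i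
    rw [hbar i]
    split_ifs with h1 h2 <;> try ring
    · omega
  rw [Finset.sum_congr rfl (fun i _ => hpoint i), Finset.sum_add_distrib]
  have hA : ∑ i : Fin k, (if (i:ℕ) < lstar then steepR δ p i else 0) = psum (steepR δ p) lstar := by
    rw [← Finset.sum_filter]; rfl
  rw [hA]
  rcases eq_or_lt_of_le hlk with hkl | hlt
  · -- lstar = k : second sum is 0, and psum r k = 1
    have h0 : ∀ i : Fin k, (if (i:ℕ) = lstar then 1 - psum (steepR δ p) lstar else 0) = 0 := by
      intro i; rw [if_neg (by have := i.2; omega)]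
    rw [Finset.sum_congr rfl (fun i _ => h0 i), Finset.sum_const, smul_zero, add_zero]
    have h1 := sum_steepR hp1 h1l hlk (δ := δ)
    have h2 : psum (steepR δ p) lstar = ∑ i, steepR δ p i := by
      rw [hkl]; exact psum_k _ _ le_rfl
    have hδ0 : δ ≤ 0 := by rw [h2, h1] at hS1; linarith
    have : δ = 0 := le_antisymm hδ0 hδ
    rw [h2, h1, this]; ring
  · have h0 : ∀ i : Fin k, ((i:ℕ) = lstar) = (i = ⟨lstar, hlt⟩) := fun i => by
      simp [Fin.ext_iff]
    simp_rw [h0]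
    rw [Finset.sum_ite_eq' univ (⟨lstar, hlt⟩ : Fin k), if_pos (Finset.mem_univ _)]
    ring

include hpa h1l hS2 in
lemma v_lt_plstar (hlt : lstar < k) : 1 - psum (steepR δ p) lstar < p ⟨lstar, hlt⟩ := by
  have h1 := psum_succ (steepR δ p) hlt
  have h2 : steepR δ p ⟨lstar, hlt⟩ = p ⟨lstar, hlt⟩ := by
    unfold steepR; rw [if_neg (by simp; omega)]
  have h3 := hS2 hlt
  rw [h1, h2] at h3
  linarith

include hpa hp0 hδ h1l hlk hS1 hS2 hbar in
lemma pbar_antitone : Antitone pbar := by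
  intro i j hij
  have hij' : (i:ℕ) ≤ (j:ℕ) := hij
  rw [hbar i, hbar j]
  rcases lt_trichotomy (j:ℕ) lstar with hj | hj | hj
  · rw [if_pos hj, if_pos (by omega)]
    unfold steepR
    rcases eq_or_ne (i:ℕ) 0 with hi0 | hi0
    · rcases eq_or_ne (j:ℕ) 0 with hj0 | hj0
      · rw [if_pos hi0, if_pos hj0]
        have : i = j := Fin.ext (by omega)
        rw [this]
      · rw [if_pos hi0, if_neg hj0]
        have := hpa hij
        linarith
    · rw [if_neg hi0, if_neg (by omega)]
      exact hpa hij
  · have hlt : lstar < k := by omega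
    rw [if_neg (by omega), if_pos hj]
    rcases lt_or_ge (i:ℕ) lstar with hi | hi
    · rw [if_pos hi]
      have h1 : 1 - psum (steepR δ p) lstar < p ⟨lstar, hlt⟩ := v_lt_plstar hpa h1l hS2 hlt
      have h2 : p ⟨lstar, hlt⟩ ≤ p i := hpa (by simp [Fin.le_def]; omega)
      have h3 : p i ≤ steepR δ p i := by
        unfold steepR; split_ifs <;> linarith
      linarith
    · rw [if_neg (by omega), if_pos (by omega)]
  · rw [if_neg (by omega), if_neg (by omega)]
    have := pbar_nonneg hp0 hδ h1l hS1 hbar i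
    rw [hbar i] at this
    exact this

include hpa hp0 hp1 hδ h1l hlk hS1 hS2 hbar in
lemma pbar_l1 : l1dist p pbar ≤ δ := by
  have hk : 0 < k := by omega
  set d : Fin k → ℝ := fun i => |p i - pbar i| with hd
  have htot : l1dist p pbar = psum d lstar + tlsum d lstar := (psum_tlsum d lstar).symm
  have hhead : psum d lstar = δ / 2 := by
    have : ∀ i ∈ univ.filter (fun i : Fin k => (i:ℕ) < lstar),
        d i = (if (i:ℕ) = 0 then δ / 2 else 0) := by
      intro i hi
      have hi' : (i:ℕ) < lstar := by simpa using hi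
      simp only [hd]
      rw [hbar i, if_pos hi']
      unfold steepR
      rcases eq_or_ne (i:ℕ) 0 with h0 | h0
      · rw [if_pos h0, if_pos h0]
        rw [abs_of_nonpos (by linarith)]; ring
      · rw [if_neg h0, if_neg h0]
        simp
    unfold psum
    rw [Finset.sum_congr rfl this, psum_ite_zero hk h1l]
  rcases eq_or_lt_of_le hlk with hkl | hlt
  · have h0 : tlsum d lstar = 0 := by
      unfold tlsum
      rw [Finset.filter_false_of_mem (fun i _ => by have := i.2; omega), Finset.sum_empty]
    rw [htot, hhead, h0]
    linarith
  · have htl : tlsum d lstar = d ⟨lstar, hlt⟩ + tlsum d (lstar + 1) := tlsum_succ d hlt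
    have hdl : d ⟨lstar, hlt⟩ = p ⟨lstar, hlt⟩ - (1 - psum (steepR δ p) lstar) := by
      simp only [hd]
      rw [hbar ⟨lstar, hlt⟩, if_neg (by simp), if_pos (by simp)]
      rw [abs_of_nonneg (by linarith [v_lt_plstar hpa h1l hS2 hlt])]
    have htl2 : tlsum d (lstar + 1) = tlsum p (lstar + 1) := by
      unfold tlsum
      apply Finset.sum_congr rfl
      intro i hi
      have hi' : lstar + 1 ≤ (i:ℕ) := by simpa using hi
      simp only [hd]
      rw [hbar i, if_neg (by omega), if_neg (by omega), abs_of_nonneg (by linarith [hp0 i])]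
      ring_nf
    have hps : psum p (lstar + 1) + tlsum p (lstar + 1) = 1 := by
      rw [psum_tlsum, hp1]
    have hsucc : psum p (lstar + 1) = psum p lstar + p ⟨lstar, hlt⟩ := psum_succ p hlt
    have hrp : psum (steepR δ p) lstar = psum p lstar + δ / 2 := steepR_psum hk δ p h1l
    rw [htot, hhead, htl, hdl, htl2, hrp]
    linarith

include hlk hS1 hbar in
lemma steep_key (hk : 0 < k) (hrp : ∀ l : ℕ, 1 ≤ l → psum (steepR δ p) l = psum p l + δ / 2)
    {q' : Fin k → ℝ} (hq0 : ∀ i, 0 ≤ q' i) (hq1 : ∑ i, q' i = 1)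
    (hqu : ∀ l : ℕ, l ≤ k → psum q' l ≤ psum p l + δ / 2)
    (hbar1 : ∑ i, pbar i = 1) :
    ∀ l : ℕ, 1 ≤ l → l ≤ k → psum q' l ≤ psum pbar l := by
  intro l hl1 hlk'
  rcases le_or_gt l lstar with hll | hll
  · have h1 : psum pbar l = psum (steepR δ p) l := by
      unfold psum
      apply Finset.sum_congr rfl
      intro i hi
      have : (i:ℕ) < l := by simpa using hi
      rw [hbar i, if_pos (by omega)]
    rw [h1, hrp l hl1]
    exact hqu l hlk'
  · have h1 : tlsum pbar l = 0 := by
      unfold tlsum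
      rw [Finset.sum_congr rfl (fun i hi => by
        have : l ≤ (i:ℕ) := by simpa using hi
        rw [hbar i, if_neg (by omega), if_neg (by omega)]), Finset.sum_const, smul_zero]
    have h2 : psum pbar l = 1 := by
      have := psum_tlsum pbar l
      rw [h1, hbar1] at this
      linarith
    have h3 : tlsum q' l ≥ 0 := Finset.sum_nonneg (fun i _ => hq0 i)
    have h4 := psum_tlsum q' l
    rw [hq1] at h4
    linarith
end Steep

lemma psum_le_total {a : Fin k → ℝ} (h0 : ∀ i, 0 ≤ a i) (l : ℕ) : psum a l ≤ ∑ i, a i := by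
  have := psum_tlsum a l
  have h2 : 0 ≤ tlsum a l := Finset.sum_nonneg (fun i _ => h0 i)
  linarith

lemma psum_e1 (hk : 0 < k) {l : ℕ} (hl : 1 ≤ l) : psum (e1 k) l = 1 :=
  psum_ite_zero hk hl 1

lemma e1_sum (hk : 0 < k) : ∑ i, e1 k i = 1 := by
  rw [← psum_k (e1 k) k le_rfl, psum_e1 hk (by omega)]

lemma e1_antitone : Antitone (e1 k) := by
  intro i j hij
  unfold e1
  split_ifs with h1 h2 <;> try norm_num
  · exact absurd (Fin.ext (by omega) : i = j) (by rintro rfl; omega)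
    
lemma unif_sum (hk : 0 < k) : ∑ i, unif k i = 1 := by
  unfold unif
  rw [Finset.sum_const, card_univ, Fintype.card_fin, nsmul_eq_mul,
    mul_inv_cancel₀ (by positivity : (k:ℝ) ≠ 0)]

lemma psum_unif {l : ℕ} (hl : l ≤ k) : psum (unif k) l = (l:ℝ) * (k:ℝ)⁻¹ := by
  unfold psum unif
  rw [Finset.sum_const, card_filter_lt l hl, nsmul_eq_mul]

end

/-- for a Schur-concave `f`, the smoothed maximum is attained at the
flattest `δ`-approximation and the smoothed minimum at the steepest one:
`f(p̄^(δ)) ≤ f(q) ≤ f(p̲^(δ))` for every `q` with `‖q − p‖ ≤ δ`. -/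
theorem schurConcave_smooth_max_min {k : ℕ} (f : (Fin k → ℝ) → ℝ)
    (hf : ∀ a b : Fin k → ℝ, IsProbDist a → IsProbDist b → Majorizes a b → f a ≤ f b)
    (δ : ℝ) (hδ : 0 ≤ δ)
    (p : Fin k → ℝ) (hp : IsProbDist p) (hord : Antitone p)
    (pbar pflat : Fin k → ℝ)
    (hpbar : IsSteepest δ p pbar) (hpflat : IsFlattest δ p pflat) :
    (IsProbDist pbar ∧ l1dist p pbar ≤ δ) ∧
    (IsProbDist pflat ∧ l1dist p pflat ≤ δ) ∧
      ∀ q : Fin k → ℝ, IsProbDist q → l1dist q p ≤ δ →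
        f pbar ≤ f q ∧ f q ≤ f pflat := by
  obtain ⟨hp0, hp1⟩ := hp
  have hk : 0 < k := by
    rcases Nat.eq_zero_or_pos k with h | h
    · subst h; simp at hp1
    · exact h
  -- Part 1: pbar is a probability distribution within δ of p, and pbar is antitone
  have hpbar_facts : IsProbDist pbar ∧ l1dist p pbar ≤ δ ∧ Antitone pbar := by
    rcases hpbar with ⟨hd, rfl⟩ | ⟨hd, lstar, ⟨h1l, hlk, hS1, hS2⟩, hbar⟩
    · exact ⟨⟨fun i => by unfold e1; split_ifs <;> norm_num, e1_sum hk⟩, hd, e1_antitone⟩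
    · exact ⟨⟨pbar_nonneg hp0 hδ h1l hS1 hbar, pbar_sum hp1 hδ h1l hlk hS1 hbar⟩,
        pbar_l1 hord hp0 hp1 hδ h1l hlk hS1 hS2 hbar,
        pbar_antitone hord hp0 hδ h1l hlk hS1 hS2 hbar⟩
  -- Part 2: pflat facts; in the nontrivial case we record y < x as well
  have hpflat_facts : IsProbDist pflat ∧ l1dist p pflat ≤ δ ∧ Antitone pflat := by
    rcases hpflat with ⟨hd, rfl⟩ | ⟨hd, x, y, hx, hy, heps, hgam, hfl⟩
    · exact ⟨⟨fun i => by unfold unif; positivity, unif_sum hk⟩, hd, fun i j hij => le_rfl⟩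
    · have hεγ := eps_gamma_unif p hk hp1
      have hε : δ / 2 < epsFn p (k:ℝ)⁻¹ := by
        rcases hεγ with ⟨h1, h2⟩
        rw [h2, ← h1] at hd
        linarith
      have hγ : δ / 2 < gammaFn p (k:ℝ)⁻¹ := by
        rcases hεγ with ⟨h1, h2⟩
        rw [h2, h1] at hd
        linarith
      have hxk : (k:ℝ)⁻¹ < x := by
        by_contra h
        push_neg at h
        have := epsFn_anti p h
        rw [heps] at this
        linarith
      have hyk : y < (k:ℝ)⁻¹ := by
        by_contra h
        push_neg at h
        have := gammaFn_mono p h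
        rw [hgam] at this
        linarith
      have hyx : y < x := lt_trans hyk hxk
      refine ⟨⟨fun i => ?_, flat_sum hp1 hyx heps hgam hfl⟩, ?_, flat_antitone hord hyx hfl⟩
      · rw [flat_clamp hyx hfl i]
        have : (0:ℝ) ≤ y := hy.1
        exact le_trans this (le_max_left _ _)
      · rw [flat_l1 hyx hfl, heps, hgam]
        linarith
  refine ⟨⟨hpbar_facts.1, hpbar_facts.2.1⟩, ⟨hpflat_facts.1, hpflat_facts.2.1⟩, ?_⟩
  intro q hq hqd
  obtain ⟨hq0, hq1⟩ := hq
  set q' := descSort q with hq'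
  have hqa : Antitone q' := descSort_antitone q
  have hq'1 : ∑ i, q' i = 1 := by rw [hq', sum_descSort, hq1]
  have hq'0 : ∀ i, 0 ≤ q' i := fun i => hq0 _
  have hsum_eq : ∑ i, q i = ∑ i, p i := by rw [hq1, hp1]
  have hqu : ∀ l : ℕ, l ≤ k → psum q' l ≤ psum p l + δ / 2 :=
    fun l hl => psum_descSort_le hord hsum_eq hl hqd
  have hql : ∀ l : ℕ, l ≤ k → psum p l - δ / 2 ≤ psum q' l :=
    fun l hl => le_psum_descSort hqa hsum_eq hl hqd
  constructor
  · -- f pbar ≤ f q via pbar ≻ q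
    apply hf pbar q ⟨hpbar_facts.1.1, hpbar_facts.1.2⟩ ⟨hq0, hq1⟩
    constructor
    · rw [hpbar_facts.1.2, hq1]
    · intro l hl1 hlk
      rw [descSort_eq_self hpbar_facts.2.2]
      rcases hpbar with ⟨hd, heq⟩ | ⟨hd, lstar, ⟨h1l, hlstk, hS1, hS2⟩, hbar⟩
      · subst heq
        rw [psum_e1 hk hl1]
        calc psum q' l ≤ ∑ i, q' i := psum_le_total hq'0 l
          _ = 1 := hq'1
      · exact steep_key hlstk hS1 hbar hk (fun l hl => steepR_psum hk δ p hl)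
          hq'0 hq'1 hqu (pbar_sum hp1 hδ h1l hlstk hS1 hbar) l hl1 hlk
  · -- f q ≤ f pflat via q ≻ pflat
    apply hf q pflat ⟨hq0, hq1⟩ ⟨hpflat_facts.1.1, hpflat_facts.1.2⟩
    constructor
    · rw [hpflat_facts.1.2, hq1]
    · intro l hl1 hlk
      rw [descSort_eq_self hpflat_facts.2.2]
      rcases hpflat with ⟨hd, heq⟩ | ⟨hd, x, y, hx, hy, heps, hgam, hfl⟩
      · subst heq
        rw [psum_unif hlk]
        have havg := psum_avg hqa hlk le_rfl
        rw [psum_k q' k le_rfl, hq'1, mul_one] at havg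
        have hk0 : (0:ℝ) < k := by exact_mod_cast hk
        rw [show (l:ℝ) * (k:ℝ)⁻¹ = (l:ℝ) / k by ring, div_le_iff₀ hk0]
        linarith [havg]
      · have hεγ := eps_gamma_unif p hk hp1
        have hε : δ / 2 < epsFn p (k:ℝ)⁻¹ := by
          rcases hεγ with ⟨h1, h2⟩; rw [h2, ← h1] at hd; linarith
        have hγ : δ / 2 < gammaFn p (k:ℝ)⁻¹ := by
          rcases hεγ with ⟨h1, h2⟩; rw [h2, h1] at hd; linarith
        have hxk : (k:ℝ)⁻¹ < x := by
          by_contra h; push_neg at h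
          have := epsFn_anti p h; rw [heps] at this; linarith
        have hyk : y < (k:ℝ)⁻¹ := by
          by_contra h; push_neg at h
          have := gammaFn_mono p h; rw [hgam] at this; linarith
        exact flat_key hord hp1 (lt_trans hyk hxk) heps hgam hfl hqa hq'1 hql l hl1 hlk
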